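/- arXiv:1909.07663 — 7 statements merged into one kernel-verified Lean document; each statement's English description precedes it below -/
import Mathlib

section
/- Let A = (Σ, Q, i, F, δ) be a DFA. Define the DFA Star(A) with state set 2^Q, initial state ∅, final states {E ⊆ Q : E ∩ F ≠ ∅} ∪ {∅}, and transitions: from ∅ on letter a, go to {δ(i,a)} if δ(i,a) ∉ F and to {δ(i,a), i} otherwise; from nonempty E on letter a, go to δ^a(E) if δ^a(E) ∩ F = ∅ and to δ^a(E) ∪ {i} otherwise. Then L(Star(A)) = (L(A))*. -/
open scoped Computability

open scoped Classical in
/-- The subset construction `Star(A)` for the Kleene star of the language of `A`. -/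
noncomputable def StarDFA {α σ : Type} (A : DFA α σ) : DFA α (Set σ) where
  step := fun E a =>
    if E = ∅ then
      (if A.step A.start a ∈ A.accept then {A.step A.start a, A.start}
       else {A.step A.start a})
    else
      (if ((fun q => A.step q a) '' E) ∩ A.accept = ∅ then (fun q => A.step q a) '' E
       else ((fun q => A.step q a) '' E) ∪ {A.start})
  start := ∅
  accept := {E | (E ∩ A.accept).Nonempty} ∪ {∅}

section Aux
variable {α : Type}

lemma kstar_append {l : Language α} {u s : List α} (hu : u ∈ l∗) (hs : s ∈ l) :
    u ++ s ∈ l∗ := by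
  obtain ⟨S, rfl, hS⟩ := Language.mem_kstar.mp hu
  refine Language.mem_kstar.mpr ⟨S ++ [s], by simp, ?_⟩
  intro y hy
  rcases List.mem_append.mp hy with h | h
  · exact hS y h
  · rw [List.mem_singleton.mp h]; exact hs

lemma kstar_split {l : Language α} {w : List α} (hw : w ∈ l∗) (hne : w ≠ []) :
    ∃ u s, w = u ++ s ∧ u ∈ l∗ ∧ s ∈ l ∧ s ≠ [] := by
  obtain ⟨S, rfl, hS⟩ := Language.mem_kstar_iff_exists_nonempty.mp hw
  induction S using List.reverseRecOn with
  | nil => simp at hne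
  | append_singleton zs y _ =>
    refine ⟨zs.flatten, y, by simp, ?_, (hS y (by simp)).1, (hS y (by simp)).2⟩
    exact Language.join_mem_kstar fun z hz => (hS z (by simp [hz])).1

lemma singleton_append_eq {u s : List α} {a : α} (h : [a] = u ++ s) :
    (u = [] ∧ s = [a]) ∨ (u = [a] ∧ s = []) := by
  cases u with
  | nil => left; exact ⟨rfl, h.symm⟩
  | cons b u' =>
    right
    simp only [List.cons_append, List.cons.injEq] at h
    obtain ⟨rfl, h2⟩ := h
    obtain ⟨rfl, rfl⟩ := List.append_eq_nil_iff.mp h2.symm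
    exact ⟨rfl, rfl⟩

lemma starDFA_eval {σ : Type} (A : DFA α σ) (w : List α) (hw : w ≠ []) :
    (StarDFA A).eval w =
      {q | ∃ u s, w = u ++ s ∧ u ∈ A.accepts∗ ∧ q = A.evalFrom A.start s} := by
  classical
  induction w using List.reverseRecOn with
  | nil => simp at hw
  | append_singleton v a ih =>
    rcases eq_or_ne v [] with rfl | hv
    · -- base case : w = [a]
      have h1 : (StarDFA A).eval ([] ++ [a]) = (StarDFA A).step ∅ a := rfl
      rw [h1]
      show (if (∅ : Set σ) = ∅ then _ else _) = _
      rw [if_pos rfl]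
      ext q
      simp only [Set.mem_setOf_eq]
      constructor
      · intro hq
        by_cases hf : A.step A.start a ∈ A.accept
        · rw [if_pos hf] at hq
          rcases hq with rfl | rfl
          · exact ⟨[], [a], by simp, Language.nil_mem_kstar _, by simp⟩
          · refine ⟨[a], [], by simp, ?_, by simp⟩
            have ha : [a] ∈ A.accepts := (DFA.mem_accepts (M := A)).mpr (by simpa using hf)
            simpa using kstar_append (Language.nil_mem_kstar _) ha
        · rw [if_neg hf] at hq
          rcases hq with rfl
          exact ⟨[], [a], by simp, Language.nil_mem_kstar _, by simp⟩
      · rintro ⟨u, s, heq, hu, rfl⟩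
        simp only [List.nil_append] at heq
        rcases singleton_append_eq heq with ⟨rfl, rfl⟩ | ⟨rfl, rfl⟩
        · by_cases hf : A.step A.start a ∈ A.accept
          · rw [if_pos hf]; left; simp
          · rw [if_neg hf]; simp
        · -- q = start, [a] ∈ L∗, hence [a] ∈ L
          obtain ⟨u', s', heq', _, hs', hne'⟩ := kstar_split hu (by simp)
          rcases singleton_append_eq heq' with ⟨rfl, rfl⟩ | ⟨rfl, rfl⟩
          · have hf : A.step A.start a ∈ A.accept := by
              simpa using (DFA.mem_accepts (M := A)).mp hs'
            rw [if_pos hf]; right; simp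
          · exact absurd rfl hne'
    · -- inductive case
      have ih' := ih hv
      have hmem : A.evalFrom A.start v ∈ (StarDFA A).eval v := by
        rw [ih']; exact ⟨[], v, by simp, Language.nil_mem_kstar _, rfl⟩
      have hne : (StarDFA A).eval v ≠ ∅ := fun h => by rw [h] at hmem; exact hmem
      have h1 : (StarDFA A).eval (v ++ [a]) = (StarDFA A).step ((StarDFA A).eval v) a :=
        DFA.eval_append_singleton _ _ _
      rw [h1]
      show (if (StarDFA A).eval v = ∅ then _ else _) = _
      rw [if_neg hne, ih']
      set E : Set σ := {q | ∃ u s, v = u ++ s ∧ u ∈ A.accepts∗ ∧ q = A.evalFrom A.start s}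
        with hE
      by_cases hC : ((fun q => A.step q a) '' E) ∩ A.accept = ∅
      · rw [if_pos hC]
        ext q
        constructor
        · rintro ⟨p, ⟨u, s, rfl, hu, rfl⟩, rfl⟩
          exact ⟨u, s ++ [a], by simp, hu, by simp⟩
        · rintro ⟨u, s, heq, hu, rfl⟩
          rcases s.eq_nil_or_concat with rfl | ⟨t, b, rfl⟩
          · -- s = [] : w ∈ L∗ nonempty, contradicts hC
            exfalso
            rw [List.append_nil] at heq
            rw [← heq] at hu
            obtain ⟨u', s', heq', hu', hs', hne'⟩ := kstar_split hu (by simp)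
            obtain ⟨t', b', rfl⟩ := s'.eq_nil_or_concat.resolve_left hne'
            have h2 : v ++ [a] = (u' ++ t') ++ [b'] := by rw [heq']; simp
            obtain ⟨h3, h4⟩ := List.append_inj' h2 rfl
            have hb : a = b' := by simpa using h4
            subst hb
            have : A.step (A.evalFrom A.start t') a ∈
                ((fun q => A.step q a) '' E) ∩ A.accept := by
              constructor
              · exact ⟨A.evalFrom A.start t', ⟨u', t', h3, hu', rfl⟩, rfl⟩
              · simpa [DFA.eval, DFA.evalFrom_append_singleton] using (DFA.mem_accepts (M := A)).mp hs'
            rw [hC] at this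
            exact this
          · rw [List.concat_eq_append] at heq
            have h2 : v ++ [a] = u ++ t ++ [b] := by rw [heq]; simp
            obtain ⟨h3, h4⟩ := List.append_inj' h2 rfl
            have hb : a = b := by simpa using h4
            subst hb
            refine ⟨A.evalFrom A.start t, ⟨u, t, h3, hu, rfl⟩, ?_⟩
            simp [DFA.evalFrom_append_singleton]
      · rw [if_neg hC]
        have hstar : v ++ [a] ∈ A.accepts∗ := by
          obtain ⟨q, ⟨p, ⟨u, s, rfl, hu, rfl⟩, rfl⟩, hq⟩ :=
            Set.nonempty_iff_ne_empty.mpr hC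
          have : s ++ [a] ∈ A.accepts := (DFA.mem_accepts (M := A)).mpr
            (by simpa [DFA.eval, DFA.evalFrom_append_singleton] using hq)
          simpa using kstar_append hu this
        ext q
        constructor
        · rintro (⟨p, ⟨u, s, rfl, hu, rfl⟩, rfl⟩ | rfl)
          · exact ⟨u, s ++ [a], by simp, hu, by simp⟩
          · exact ⟨v ++ [a], [], by simp, hstar, rfl⟩
        · rintro ⟨u, s, heq, hu, rfl⟩
          rcases s.eq_nil_or_concat with rfl | ⟨t, b, rfl⟩
          · right; rfl
          · rw [List.concat_eq_append] at heq
            have h2 : v ++ [a] = u ++ t ++ [b] := by rw [heq]; simp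
            obtain ⟨h3, h4⟩ := List.append_inj' h2 rfl
            have hb : a = b := by simpa using h4
            subst hb
            left
            refine ⟨A.evalFrom A.start t, ⟨u, t, h3, hu, rfl⟩, ?_⟩
            simp [DFA.evalFrom_append_singleton]
end Aux

/-- The star construction is correct: `L(Star(A)) = (L(A))*`. -/
theorem starDFA_accepts {α σ : Type} (A : DFA α σ) :
    (StarDFA A).accepts = (KStar.kstar A.accepts : Language α) := by
  ext w
  rw [DFA.mem_accepts]
  rcases eq_or_ne w [] with rfl | hw
  · refine iff_of_true ?_ (Language.nil_mem_kstar _)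
    exact Or.inr rfl
  · rw [starDFA_eval A w hw]
    constructor
    · rintro (⟨q, ⟨u, s, rfl, hu, rfl⟩, hq⟩ | h)
      · exact kstar_append hu ((DFA.mem_accepts (M := A)).mpr hq)
      · exfalso
        have : A.evalFrom A.start w ∈
            ({q | ∃ u s, w = u ++ s ∧ u ∈ A.accepts∗ ∧ q = A.evalFrom A.start s} : Set σ) :=
          ⟨[], w, by simp, Language.nil_mem_kstar _, rfl⟩
        rw [h] at this
        exact this
    · intro h
      obtain ⟨u, s, heq, hu, hs, _⟩ := kstar_split h hw
      exact Or.inl ⟨A.evalFrom A.start s, ⟨u, s, heq, hu, rfl⟩, (DFA.mem_accepts (M := A)).mp hs⟩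
end

section
/- A tableau T ⊆ [n₁] × [n₂] (viewed as a boolean matrix) is right-triangle free — meaning there are no x ≠ x' and y ≠ y' with exactly three of the four positions (x,y), (x,y'), (x',y), (x',y') in T — if and only if for all rows i, i' ∈ [n₁], the rows i and i' of T are either equal (T contains (i,j) iff it contains (i',j), for all j) or disjoint (for no j are both (i,j) and (i',j) in T). -/
/-- A tableau `T ⊆ [n₁] × [n₂]` is right-triangle free: there are no `x ≠ x'`,
`y ≠ y'` such that exactly three of the four positions `(x,y), (x,y'), (x',y), (x',y')`
belong to `T`. -/
def RTFree {n₁ n₂ : ℕ} (T : Set (Fin n₁ × Fin n₂)) : Prop :=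
  ¬ ∃ (x x' : Fin n₁) (y y' : Fin n₂), x ≠ x' ∧ y ≠ y' ∧
      (x, y) ∈ T ∧ (x, y') ∈ T ∧ (x', y) ∈ T ∧ (x', y') ∉ T

/-- A tableau is right-triangle free iff any two of its rows are equal or disjoint. -/
theorem rtfree_iff_rows_equal_or_disjoint {n₁ n₂ : ℕ} (T : Set (Fin n₁ × Fin n₂)) :
    RTFree T ↔ ∀ i i' : Fin n₁,
      (∀ j : Fin n₂, (i, j) ∈ T ↔ (i', j) ∈ T) ∨
        (∀ j : Fin n₂, ¬((i, j) ∈ T ∧ (i', j) ∈ T)) := by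
  constructor
  · intro h i i'
    by_cases hii : i = i'
    · subst hii; exact Or.inl fun j => Iff.rfl
    by_cases hd : ∀ j : Fin n₂, ¬((i, j) ∈ T ∧ (i', j) ∈ T)
    · exact Or.inr hd
    push_neg at hd
    obtain ⟨j0, h1, h2⟩ := hd
    left
    intro j
    constructor
    · intro hij
      by_contra hij'
      by_cases hj : j = j0
      · subst hj; exact hij' h2
      · exact h ⟨i, i', j0, j, hii, fun e => hj e.symm, h1, hij, h2, hij'⟩
    · intro hij
      by_contra hij'
      by_cases hj : j = j0
      · subst hj; exact hij' h1
      · exact h ⟨i', i, j0, j, fun e => hii e.symm, fun e => hj e.symm, h2, hij, h1, hij'⟩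
  · rintro h ⟨x, x', y, y', hx, hy, h1, h2, h3, h4⟩
    rcases h x x' with he | hd
    · exact h4 ((he y').mp h2)
    · exact hd y ⟨h1, h3⟩
end

section
/- For every tableau T ⊆ [n₁] × [n₂] there exists a unique smallest (with respect to inclusion) right-triangle-free tableau Sat(T) containing T. -/
/-- Every tableau has a unique smallest right-triangle-free tableau containing it. -/
theorem sat_exists_unique {n₁ n₂ : ℕ} (T : Set (Fin n₁ × Fin n₂)) :
    ∃! S : Set (Fin n₁ × Fin n₂),
      RTFree S ∧ T ⊆ S ∧ ∀ S' : Set (Fin n₁ × Fin n₂), RTFree S' → T ⊆ S' → S ⊆ S' := by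
  set S : Set (Fin n₁ × Fin n₂) := ⋂₀ {S' | RTFree S' ∧ T ⊆ S'} with hS
  have hmem : ∀ S' ∈ {S' : Set (Fin n₁ × Fin n₂) | RTFree S' ∧ T ⊆ S'}, S ⊆ S' :=
    fun S' h => Set.sInter_subset_of_mem h
  have hfree : RTFree S := by
    rintro ⟨x, x', y, y', hxx, hyy, h1, h2, h3, h4⟩
    have : ∃ S' ∈ {S' : Set (Fin n₁ × Fin n₂) | RTFree S' ∧ T ⊆ S'}, (x', y') ∉ S' := by
      by_contra hc
      push_neg at hc
      exact h4 (Set.mem_sInter.mpr hc)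
    obtain ⟨S', ⟨hS'free, _⟩, hnot⟩ := this
    exact hS'free ⟨x, x', y, y', hxx, hyy, hmem S' ⟨hS'free, ‹T ⊆ S'›⟩ h1,
      hmem S' ⟨hS'free, ‹T ⊆ S'›⟩ h2, hmem S' ⟨hS'free, ‹T ⊆ S'›⟩ h3, hnot⟩
  have hsub : T ⊆ S := Set.subset_sInter fun S' hS' => hS'.2
  refine ⟨S, ⟨hfree, hsub, fun S' h1 h2 => hmem S' ⟨h1, h2⟩⟩, ?_⟩
  rintro S' ⟨h1, h2, h3⟩
  exact Set.Subset.antisymm (h3 S hfree hsub) (hmem S' ⟨h1, h2⟩)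
end

section
/- Define a relation → on tableaux over [n₁] × [n₂] by T → T' iff T' = T ∪ {(i',j')} with (i',j') ∉ T and there exists (i,j) with i ≠ i', j ≠ j', and {(i,j), (i',j), (i,j')} ⊆ T. Let ↔* be the symmetric-reflexive-transitive closure of →. Then two tableaux T, T' satisfy T ↔* T' if and only if Sat(T) = Sat(T'), where Sat(T) is the smallest right-triangle-free tableau containing T. -/
/-- The right-triangle completion step: `T → T'` iff `T' = T ∪ {(i',j')}` with
`(i',j') ∉ T` and `{(i,j), (i',j), (i,j')} ⊆ T` for some `i ≠ i'`, `j ≠ j'`. -/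
def TStep {n₁ n₂ : ℕ} (T T' : Set (Fin n₁ × Fin n₂)) : Prop :=
  ∃ (i i' : Fin n₁) (j j' : Fin n₂), i ≠ i' ∧ j ≠ j' ∧ (i', j') ∉ T ∧
    (i, j) ∈ T ∧ (i', j) ∈ T ∧ (i, j') ∈ T ∧ T' = T ∪ {(i', j')}

lemma tstep_subset_iff {n₁ n₂ : ℕ} {A B U : Set (Fin n₁ × Fin n₂)}
    (h : TStep A B) (hU : RTFree U) : A ⊆ U ↔ B ⊆ U := by
  obtain ⟨i, i', j, j', hii, hjj, hnot, h1, h2, h3, rfl⟩ := h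
  constructor
  · intro hAU
    have hp : (i', j') ∈ U := by
      by_contra hc
      exact hU ⟨i, i', j, j', hii, hjj, hAU h1, hAU h3, hAU h2, hc⟩
    intro p hp'
    rcases hp' with h | h
    · exact hAU h
    · rw [Set.mem_singleton_iff] at h; subst h; exact hp
  · intro h p hp; exact h (Or.inl hp)

lemma eqv_subset_iff {n₁ n₂ : ℕ} {T T' : Set (Fin n₁ × Fin n₂)}
    (h : Relation.EqvGen TStep T T') :
    ∀ U, RTFree U → (T ⊆ U ↔ T' ⊆ U) := by
  induction h with
  | rel a b hab => exact fun U hU => tstep_subset_iff hab hU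
  | refl a => exact fun U _ => Iff.rfl
  | symm a b _ ih => exact fun U hU => (ih U hU).symm
  | trans a b c _ _ ih1 ih2 => exact fun U hU => (ih1 U hU).trans (ih2 U hU)

lemma reach {n₁ n₂ : ℕ} : ∀ (k : ℕ) (T S : Set (Fin n₁ × Fin n₂)),
    (S \ T).ncard ≤ k → RTFree S → T ⊆ S → (∀ U, RTFree U → T ⊆ U → S ⊆ U) →
    Relation.ReflTransGen TStep T S := by
  intro k
  induction k with
  | zero =>
    intro T S hcard hS hTS hmin
    have h0 : (S \ T).ncard = 0 := Nat.le_zero.mp hcard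
    rw [Set.ncard_eq_zero (Set.toFinite _)] at h0
    have hST : S ⊆ T := fun p hp => by
      by_contra hc
      exact absurd (h0 ▸ ⟨hp, hc⟩ : p ∈ (∅ : Set _)) (Set.notMem_empty p)
    rw [Set.Subset.antisymm hST hTS]
  | succ k ih =>
    intro T S hcard hS hTS hmin
    by_cases hT : RTFree T
    · rw [Set.Subset.antisymm (hmin T hT (fun _ hp => hp)) hTS]
    · rcases not_not.mp hT with ⟨x, x', y, y', hxx, hyy, h1, h2, h3, h4⟩
      have step : TStep T (T ∪ {(x', y')}) :=
        ⟨x, x', y, y', hxx, hyy, h4, h1, h3, h2, rfl⟩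
      have hpS : (x', y') ∈ S :=
        ((tstep_subset_iff step hS).mp hTS) (Or.inr rfl)
      have hsub : T ∪ {(x', y')} ⊆ S := by
        intro p hp
        rcases hp with h | h
        · exact hTS h
        · rw [Set.mem_singleton_iff] at h; subst h; exact hpS
      have hlt : (S \ (T ∪ {(x', y')})).ncard < (S \ T).ncard := by
        apply Set.ncard_lt_ncard _ (Set.toFinite _)
        constructor
        · intro p hp
          exact ⟨hp.1, fun h => hp.2 (Or.inl h)⟩
        · intro hc
          have : (x', y') ∈ S \ (T ∪ {(x', y')}) := hc ⟨hpS, h4⟩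
          exact this.2 (Or.inr rfl)
      exact Relation.ReflTransGen.head step
        (ih (T ∪ {(x', y')}) S (by omega) hS hsub
          (fun U hU hTU => hmin U hU (fun p hp => hTU (Or.inl hp))))

lemma rtg_to_eqv {α : Type*} {r : α → α → Prop} {a b : α}
    (h : Relation.ReflTransGen r a b) : Relation.EqvGen r a b := by
  induction h with
  | refl => exact Relation.EqvGen.refl a
  | tail _ hbc ih => exact ih.trans _ _ _ (Relation.EqvGen.rel _ _ hbc)

/-- Two tableaux are related by the symmetric-reflexive-transitive closure of `→`
iff they have the same saturation (smallest right-triangle-free superset). -/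
theorem eqvGen_tstep_iff_sat_eq {n₁ n₂ : ℕ} (T T' S S' : Set (Fin n₁ × Fin n₂))
    (hS : RTFree S ∧ T ⊆ S ∧ ∀ U, RTFree U → T ⊆ U → S ⊆ U)
    (hS' : RTFree S' ∧ T' ⊆ S' ∧ ∀ U, RTFree U → T' ⊆ U → S' ⊆ U) :
    Relation.EqvGen TStep T T' ↔ S = S' := by
  obtain ⟨hSfree, hTS, hSmin⟩ := hS
  obtain ⟨hS'free, hT'S', hS'min⟩ := hS'
  constructor
  · intro h
    apply Set.Subset.antisymm
    · exact hSmin S' hS'free ((eqv_subset_iff h S' hS'free).mpr hT'S')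
    · exact hS'min S hSfree ((eqv_subset_iff h S hSfree).mp hTS)
  · intro h
    have h1 : Relation.EqvGen TStep T S :=
      rtg_to_eqv (reach (S \ T).ncard T S le_rfl hSfree hTS hSmin)
    have h2 : Relation.EqvGen TStep T' S' :=
      rtg_to_eqv (reach (S' \ T').ncard T' S' le_rfl hS'free hT'S' hS'min)
    exact h1.trans _ _ _ (h ▸ h2.symm _ _)
end

section
/- Let F₁ ⊆ [n₁], F₂ ⊆ [n₂], and define the final zone Z = (F₁ × [n₂]) ⊕ ([n₁] × F₂) (symmetric difference). If tableaux T, T' ⊆ [n₁] × [n₂] satisfy T → T' (i.e., T' = T ∪ {(i',j')} where there exists (i,j) with {(i,j),(i',j),(i,j')} ⊆ T, i ≠ i', j ≠ j'), then T ∩ Z ≠ ∅ if and only if T' ∩ Z ≠ ∅. -/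
/-- The triangle-completion step preserves finality: with final zone
`Z = (F₁ × [n₂]) ⊕ ([n₁] × F₂)`, if `T → T'` then `T` meets `Z` iff `T'` meets `Z`. -/
theorem tstep_preserves_final {n₁ n₂ : ℕ}
    (F₁ : Set (Fin n₁)) (F₂ : Set (Fin n₂)) (T T' : Set (Fin n₁ × Fin n₂))
    (h : TStep T T') :
    (T ∩ symmDiff (F₁ ×ˢ (Set.univ : Set (Fin n₂)))
        ((Set.univ : Set (Fin n₁)) ×ˢ F₂)).Nonempty ↔
      (T' ∩ symmDiff (F₁ ×ˢ (Set.univ : Set (Fin n₂)))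
        ((Set.univ : Set (Fin n₁)) ×ˢ F₂)).Nonempty := by
  obtain ⟨i, i', j, j', hii, hjj, hni, hij, hi'j, hij', hT'⟩ := h
  subst hT'
  constructor
  · rintro ⟨x, hx, hz⟩
    exact ⟨x, Or.inl hx, hz⟩
  · rintro ⟨x, hx, hz⟩
    rcases hx with hx | hx
    · exact ⟨x, hx, hz⟩
    · rw [Set.mem_singleton_iff] at hx
      subst hx
      simp only [Set.mem_symmDiff, Set.mem_diff, Set.mem_prod, Set.mem_univ,
        and_true, true_and] at hz
      rcases hz with ⟨hi'F, hj'F⟩ | ⟨hj'F, hi'F⟩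
      · by_cases h1 : i ∈ F₁
        · exact ⟨(i, j'), hij', Or.inl ⟨by simp [h1], by simp [hj'F]⟩⟩
        · by_cases h2 : j ∈ F₂
          · exact ⟨(i, j), hij, Or.inr ⟨by simp [h2], by simp [h1]⟩⟩
          · exact ⟨(i', j), hi'j, Or.inl ⟨by simp [hi'F], by simp [h2]⟩⟩
      · by_cases h2 : j ∈ F₂
        · exact ⟨(i', j), hi'j, Or.inr ⟨by simp [h2], by simp [hi'F]⟩⟩
        · by_cases h1 : i ∈ F₁
          · exact ⟨(i, j), hij, Or.inl ⟨by simp [h1], by simp [h2]⟩⟩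
          · exact ⟨(i, j'), hij', Or.inr ⟨by simp [hj'F], by simp [h1]⟩⟩
end

section
/- Let T, T' ⊆ [n₁] × [n₂] be tableaux with T → T', and let (f,g) be a pair of functions f : [n₁] → [n₁], g : [n₂] → [n₂]. Let (f,g)(T) = {(f(x), g(y)) : (x,y) ∈ T}. Then either (f,g)(T) → (f,g)(T') or (f,g)(T) = (f,g)(T'). -/
/-- If `T → T'` and `(f,g)` is a pair of self-maps, then the images
`(f,g)(T)` and `(f,g)(T')` satisfy `(f,g)(T) → (f,g)(T')` or are equal. -/
theorem tstep_image {n₁ n₂ : ℕ} (T T' : Set (Fin n₁ × Fin n₂))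
    (f : Fin n₁ → Fin n₁) (g : Fin n₂ → Fin n₂) (h : TStep T T') :
    TStep (Prod.map f g '' T) (Prod.map f g '' T') ∨
      Prod.map f g '' T = Prod.map f g '' T' := by
  obtain ⟨i, i', j, j', hii, hjj, hnot, h1, h2, h3, hT'⟩ := h
  subst hT'
  have himg : Prod.map f g '' (T ∪ {(i', j')}) = Prod.map f g '' T ∪ {(f i', g j')} := by
    rw [Set.image_union, Set.image_singleton]
    rfl
  rw [himg]
  by_cases hmem : (f i', g j') ∈ Prod.map f g '' T
  · right
    rw [Set.union_eq_self_of_subset_right (Set.singleton_subset_iff.mpr hmem)]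
  · left
    have hfi : f i ≠ f i' := by
      intro he
      exact hmem ⟨(i, j'), h3, by simp [Prod.map, he]⟩
    have hgj : g j ≠ g j' := by
      intro he
      exact hmem ⟨(i', j), h2, by simp [Prod.map, he]⟩
    exact ⟨f i, f i', g j, g j', hfi, hgj, hmem,
      ⟨(i, j), h1, rfl⟩, ⟨(i', j), h2, rfl⟩, ⟨(i, j'), h3, rfl⟩, rfl⟩
end

section
/- In the DFA StX(Mon(n₁,n₂; F₁,F₂)) for any F₁ ⊆ [n₁], F₂ ⊆ [n₂], if two states (tableaux) T and T' satisfy T ↔* T' (the closure of the triangle-completion relation →), then T and T' are Nerode-equivalent, i.e., not distinguishable by any word. -/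
open scoped Classical in
/-- The DFA `StX(Mon(n₁,n₂;F₁,F₂))`, determined by its final zone `Z`. -/
noncomputable def StX (n₁ n₂ : ℕ) [NeZero n₁] [NeZero n₂]
    (Z : Set (Fin n₁ × Fin n₂)) :
    DFA ((Fin n₁ → Fin n₁) × (Fin n₂ → Fin n₂)) (Set (Fin n₁ × Fin n₂)) where
  step := fun E a =>
    let E' : Set (Fin n₁ × Fin n₂) :=
      if E = ∅ then {(a.1 0, a.2 0)} else Prod.map a.1 a.2 '' E
    if (E' ∩ Z).Nonempty then E' ∪ {(0, 0)} else E'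
  start := ∅
  accept := {E | (E ∩ Z).Nonempty} ∪ {∅}

/-- The parity property of the final zone. -/
def ZGood {n₁ n₂ : ℕ} (Z : Set (Fin n₁ × Fin n₂)) : Prop :=
  ∀ i i' : Fin n₁, ∀ j j' : Fin n₂,
    (i', j') ∈ Z → (i, j) ∈ Z ∨ (i', j) ∈ Z ∨ (i, j') ∈ Z

lemma zgood_symmDiff {n₁ n₂ : ℕ} (F₁ : Set (Fin n₁)) (F₂ : Set (Fin n₂)) :
    ZGood (symmDiff (F₁ ×ˢ (Set.univ : Set (Fin n₂)))
      ((Set.univ : Set (Fin n₁)) ×ˢ F₂)) := by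
  intro i i' j j' h
  simp only [Set.mem_symmDiff, Set.mem_prod, Set.mem_univ, and_true, true_and] at *
  tauto

section Aux

open scoped Classical

variable {n₁ n₂ : ℕ} [NeZero n₁] [NeZero n₂] {Z : Set (Fin n₁ × Fin n₂)}

omit [NeZero n₁] [NeZero n₂] in
lemma tstep_inter (hZ : ZGood Z) {T T' : Set (Fin n₁ × Fin n₂)} (h : TStep T T') :
    (T' ∩ Z).Nonempty ↔ (T ∩ Z).Nonempty := by
  obtain ⟨i, i', j, j', hii, hjj, hnot, h1, h2, h3, rfl⟩ := h
  constructor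
  · rintro ⟨x, hx, hxZ⟩
    rcases hx with hx | hx
    · exact ⟨x, hx, hxZ⟩
    · rw [Set.mem_singleton_iff] at hx; subst hx
      rcases hZ i i' j j' hxZ with h | h | h
      exacts [⟨(i, j), h1, h⟩, ⟨(i', j), h2, h⟩, ⟨(i, j'), h3, h⟩]
  · rintro ⟨x, hx, hxZ⟩; exact ⟨x, Or.inl hx, hxZ⟩

omit [NeZero n₁] [NeZero n₂] in
lemma tstep_ne_empty {T T' : Set (Fin n₁ × Fin n₂)} (h : TStep T T') :
    T ≠ ∅ := by
  obtain ⟨i, i', j, j', _, _, _, h1, _⟩ := h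
  exact fun he => by simp [he] at h1

lemma stx_step_of_ne {E : Set (Fin n₁ × Fin n₂)} (hE : E ≠ ∅)
    (a : (Fin n₁ → Fin n₁) × (Fin n₂ → Fin n₂)) :
    (StX n₁ n₂ Z).step E a =
      if ((Prod.map a.1 a.2 '' E) ∩ Z).Nonempty then
        Prod.map a.1 a.2 '' E ∪ {(0, 0)} else Prod.map a.1 a.2 '' E := by
  have h0 : (StX n₁ n₂ Z).step E a =
      (let E' : Set (Fin n₁ × Fin n₂) :=
        if E = ∅ then {(a.1 0, a.2 0)} else Prod.map a.1 a.2 '' E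
      if (E' ∩ Z).Nonempty then E' ∪ {(0, 0)} else E') := rfl
  rw [h0]
  simp only [if_neg hE]

lemma tstep_step (hZ : ZGood Z) {T T' : Set (Fin n₁ × Fin n₂)} (h : TStep T T')
    (a : (Fin n₁ → Fin n₁) × (Fin n₂ → Fin n₂)) :
    (StX n₁ n₂ Z).step T a = (StX n₁ n₂ Z).step T' a ∨
      TStep ((StX n₁ n₂ Z).step T a) ((StX n₁ n₂ Z).step T' a) := by
  have hTne : T ≠ ∅ := tstep_ne_empty h
  obtain ⟨i, i', j, j', hii, hjj, hnot, h1, h2, h3, hT'⟩ := h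
  have hT'ne : T' ≠ ∅ := fun he => by
    have : (i, j) ∈ T' := hT' ▸ Or.inl h1
    simp [he] at this
  have himg : Prod.map a.1 a.2 '' T' =
      Prod.map a.1 a.2 '' T ∪ {(a.1 i', a.2 j')} := by
    rw [hT', Set.image_union, Set.image_singleton]; rfl
  rw [stx_step_of_ne hTne a, stx_step_of_ne hT'ne a]
  by_cases hqmem : (a.1 i', a.2 j') ∈ Prod.map a.1 a.2 '' T
  · left
    have heq : Prod.map a.1 a.2 '' T' = Prod.map a.1 a.2 '' T := by
      rw [himg, Set.union_eq_self_of_subset_right (Set.singleton_subset_iff.mpr hqmem)]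
    rw [heq]
  · have hfi : a.1 i ≠ a.1 i' := by
      intro he
      refine hqmem ⟨(i, j'), h3, ?_⟩
      show (a.1 i, a.2 j') = (a.1 i', a.2 j')
      rw [he]
    have hgj : a.2 j ≠ a.2 j' := by
      intro he
      refine hqmem ⟨(i', j), h2, ?_⟩
      show (a.1 i', a.2 j) = (a.1 i', a.2 j')
      rw [he]
    have hTS : TStep (Prod.map a.1 a.2 '' T) (Prod.map a.1 a.2 '' T') :=
      ⟨a.1 i, a.1 i', a.2 j, a.2 j', hfi, hgj, hqmem,
        ⟨(i, j), h1, rfl⟩, ⟨(i', j), h2, rfl⟩, ⟨(i, j'), h3, rfl⟩, himg⟩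
    have hiff : ((Prod.map a.1 a.2 '' T') ∩ Z).Nonempty ↔
        ((Prod.map a.1 a.2 '' T) ∩ Z).Nonempty := tstep_inter hZ hTS
    by_cases hzn : ((Prod.map a.1 a.2 '' T) ∩ Z).Nonempty
    · have hzn' : ((Prod.map a.1 a.2 '' T') ∩ Z).Nonempty := hiff.mpr hzn
      rw [if_pos hzn, if_pos hzn', himg]
      by_cases hq0 : ((a.1 i', a.2 j') : Fin n₁ × Fin n₂) = (0, 0)
      · left; ext x
        simp only [Set.mem_union, Set.mem_singleton_iff, hq0]
        tauto
      · right
        refine ⟨a.1 i, a.1 i', a.2 j, a.2 j', hfi, hgj, ?_, ?_, ?_, ?_, ?_⟩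
        · rintro (hm | hm)
          · exact hqmem hm
          · exact hq0 hm
        · exact Or.inl ⟨(i, j), h1, rfl⟩
        · exact Or.inl ⟨(i', j), h2, rfl⟩
        · exact Or.inl ⟨(i, j'), h3, rfl⟩
        · ext x
          simp only [Set.mem_union, Set.mem_singleton_iff]
          tauto
    · have hzn' : ¬ ((Prod.map a.1 a.2 '' T') ∩ Z).Nonempty :=
        fun hc => hzn (hiff.mp hc)
      rw [if_neg hzn, if_neg hzn', himg]
      right; rw [← himg]; exact hTS

lemma stx_accept_iff {E : Set (Fin n₁ × Fin n₂)} :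
    E ∈ (StX n₁ n₂ Z).accept ↔ (E ∩ Z).Nonempty ∨ E = ∅ := by
  show E ∈ {E | (E ∩ Z).Nonempty} ∪ {∅} ↔ _
  simp [Set.mem_union, or_comm]

lemma tstep_eval (hZ : ZGood Z) :
    ∀ (w : List ((Fin n₁ → Fin n₁) × (Fin n₂ → Fin n₂)))
      (T T' : Set (Fin n₁ × Fin n₂)), TStep T T' →
      ((StX n₁ n₂ Z).evalFrom T w ∈ (StX n₁ n₂ Z).accept ↔
        (StX n₁ n₂ Z).evalFrom T' w ∈ (StX n₁ n₂ Z).accept)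
  | [], T, T', h => by
    have hiff := tstep_inter hZ h
    have hTne : T ≠ ∅ := tstep_ne_empty h
    have hT'ne : T' ≠ ∅ := by
      obtain ⟨i, i', j, j', _, _, _, h1, _, _, hT'⟩ := h
      exact fun he => by
        have : (i, j) ∈ T' := hT' ▸ Or.inl h1
        simp [he] at this
    simp only [DFA.evalFrom, List.foldl_nil, stx_accept_iff]
    constructor
    · rintro (hx | hx)
      · exact Or.inl (hiff.mpr hx)
      · exact absurd hx hTne
    · rintro (hx | hx)
      · exact Or.inl (hiff.mp hx)
      · exact absurd hx hT'ne
  | a :: w, T, T', h => by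
    rcases tstep_step hZ h a with heq | hts
    · simp only [DFA.evalFrom, List.foldl_cons]
      rw [show (StX n₁ n₂ Z).step T a = (StX n₁ n₂ Z).step T' a from heq]
    · simpa only [DFA.evalFrom, List.foldl_cons] using
        tstep_eval hZ w _ _ hts

end Aux

/-- In `StX(Mon(n₁,n₂;F₁,F₂))`, states related by the closure of the
triangle-completion relation are Nerode-equivalent. -/
theorem eqvGen_tstep_nerode (n₁ n₂ : ℕ) [NeZero n₁] [NeZero n₂]
    (F₁ : Set (Fin n₁)) (F₂ : Set (Fin n₂))
    (T T' : Set (Fin n₁ × Fin n₂)) (h : Relation.EqvGen TStep T T') :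
    ∀ w : List ((Fin n₁ → Fin n₁) × (Fin n₂ → Fin n₂)),
      ((StX n₁ n₂ (symmDiff (F₁ ×ˢ (Set.univ : Set (Fin n₂)))
          ((Set.univ : Set (Fin n₁)) ×ˢ F₂))).evalFrom T w ∈
        (StX n₁ n₂ (symmDiff (F₁ ×ˢ (Set.univ : Set (Fin n₂)))
          ((Set.univ : Set (Fin n₁)) ×ˢ F₂))).accept) ↔
      ((StX n₁ n₂ (symmDiff (F₁ ×ˢ (Set.univ : Set (Fin n₂)))
          ((Set.univ : Set (Fin n₁)) ×ˢ F₂))).evalFrom T' w ∈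
        (StX n₁ n₂ (symmDiff (F₁ ×ˢ (Set.univ : Set (Fin n₂)))
          ((Set.univ : Set (Fin n₁)) ×ˢ F₂))).accept) := by
  have hZ := zgood_symmDiff F₁ F₂
  induction h with
  | rel x y hxy => exact fun w => tstep_eval hZ w x y hxy
  | refl x => exact fun w => Iff.rfl
  | symm x y _ ih => exact fun w => (ih w).symm
  | trans x y z _ _ ih₁ ih₂ => exact fun w => (ih₁ w).trans (ih₂ w)
end
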